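/- Let G(s) = e^{iπ(1−s)/2} F_1(s) + ε e^{−iπ(1−s)/2} F_2(s) where F_1, F_2 are holomorphic in a half-plane Re(s) < σ_0 with polynomial growth in |Im(s)| on vertical strips, ε ∈ {±1}, and suppose F_1 has a zero ρ with Im(ρ) > 0 and F_1 is almost periodic in the sense that for every δ, ε' > 0 the set of τ ∈ ℝ with max_{|s|=δ} |F_1(s+ρ+iτ) − F_1(s+ρ)| < ε' is relatively dense. Then G has zeros with real part arbitrarily close to Re(ρ): for every small δ > 0 there exists τ > 0 such that G has a zero in the disc of center ρ + iτ and radius δ. -/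

import Mathlib

open Complex

/-- Minimum modulus principle: if a holomorphic function on a closed disc is
bounded below by `m > 0` on the boundary circle and `|f c| < m` at the center,
then `f` has a zero in the open disc. -/
lemma exists_zero_of_center_lt (f : ℂ → ℂ) (c : ℂ) (δ m : ℝ) (hδ : 0 < δ) (hm : 0 < m)
    (hd : DifferentiableOn ℂ f (Metric.closedBall c δ))
    (hb : ∀ z ∈ Metric.sphere c δ, m ≤ ‖f z‖)
    (hc : ‖f c‖ < m) :
    ∃ z ∈ Metric.ball c δ, f z = 0 := by
  by_contra h
  push_neg at h
  have hne : ∀ z ∈ Metric.closedBall c δ, f z ≠ 0 := by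
    intro z hz
    rcases (Metric.mem_closedBall.mp hz).lt_or_eq with h' | h'
    · exact h z (Metric.mem_ball.mpr h')
    · intro h0
      have := hb z (Metric.mem_sphere.mpr h')
      rw [h0] at this
      simp only [norm_zero] at this
      linarith
  have hcl : closure (Metric.ball c δ) = Metric.closedBall c δ := closure_ball c hδ.ne'
  have hdg : DiffContOnCl ℂ (fun z => (f z)⁻¹) (Metric.ball c δ) := by
    apply DifferentiableOn.diffContOnCl
    rw [hcl]
    exact hd.inv hne
  have hfr : ∀ z ∈ frontier (Metric.ball c δ), ‖(f z)⁻¹‖ ≤ m⁻¹ := by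
    intro z hz
    rw [frontier_ball c hδ.ne'] at hz
    have h1 : m ≤ ‖f z‖ := hb z hz
    have : ‖(f z)⁻¹‖ = (‖f z‖)⁻¹ := by simp
    rw [this]
    exact inv_anti₀ hm h1
  have hcm : c ∈ closure (Metric.ball c δ) := by
    rw [hcl]; exact Metric.mem_closedBall_self hδ.le
  have := Complex.norm_le_of_forall_mem_frontier_norm_le Metric.isBounded_ball hdg hfr hcm
  have hfc : (0:ℝ) < ‖f c‖ := by
    have := hne c (Metric.mem_closedBall_self hδ.le)
    simpa [norm_pos_iff] using this
  have h2 : ‖(f c)⁻¹‖ = (‖f c‖)⁻¹ := by simp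
  rw [h2] at this
  have h3 : m ≤ ‖f c‖ := by
    have := (inv_le_inv₀ hfc hm).mp this
    linarith [this]
  linarith

/-- Almost periodicity pushes zeros of F₁ to zeros of
G(s) = e^{iπ(1−s)/2} F₁(s) + ε e^{−iπ(1−s)/2} F₂(s): if F₁, F₂ are holomorphic with
polynomial growth on a half-plane, F₁ is not identically zero, F₁(ρ) = 0 with Im ρ > 0
and F₁ is almost periodic, then G has zeros in every small disc around some ρ + iτ, τ > 0. -/
theorem zeros_from_almost_periodicity (σ₀ : ℝ) (F₁ F₂ : ℂ → ℂ) (ε : ℝ)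
    (hε : ε = 1 ∨ ε = -1)
    (h₁ : DifferentiableOn ℂ F₁ {s : ℂ | s.re < σ₀})
    (h₂ : DifferentiableOn ℂ F₂ {s : ℂ | s.re < σ₀})
    (hgrow : ∀ a b : ℝ, b < σ₀ → ∃ A C : ℝ, 0 < C ∧ ∀ s : ℂ,
      a ≤ s.re → s.re ≤ b → 1 ≤ |s.im| →
        ‖F₁ s‖ ≤ C * |s.im| ^ A ∧ ‖F₂ s‖ ≤ C * |s.im| ^ A)
    (ρ : ℂ) (hρdom : ρ.re < σ₀) (hρim : 0 < ρ.im) (hρ : F₁ ρ = 0)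
    (hne : ¬ ∀ z : ℂ, z.re < σ₀ → F₁ z = 0)
    (hAP : ∀ δ ε' : ℝ, 0 < δ → 0 < ε' → ∃ L : ℝ, 0 < L ∧ ∀ x : ℝ, ∃ τ : ℝ,
      x ≤ τ ∧ τ ≤ x + L ∧ ∀ s : ℂ, ‖s‖ = δ →
        ‖F₁ (s + ρ + τ * I) - F₁ (s + ρ)‖ < ε') :
    ∃ δ₀ : ℝ, 0 < δ₀ ∧ ∀ δ : ℝ, 0 < δ → δ < δ₀ → ∃ τ : ℝ, 0 < τ ∧ ∃ z : ℂ,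
      ‖z - (ρ + τ * I)‖ < δ ∧
      exp (Real.pi * I * (1 - z) / 2) * F₁ z +
        (ε : ℂ) * exp (-(Real.pi * I * (1 - z) / 2)) * F₂ z = 0 := by
  have hUopen : IsOpen {s : ℂ | s.re < σ₀} := isOpen_lt continuous_re continuous_const
  -- isolated zero: get a radius r > 0 on which F₁ has no zero except ρ
  have hiso : ∀ᶠ z in nhdsWithin ρ {ρ}ᶜ, F₁ z ≠ 0 := by
    have han : AnalyticAt ℂ F₁ ρ := h₁.analyticAt (hUopen.mem_nhds hρdom)
    rcases han.eventually_eq_zero_or_eventually_ne_zero with h | h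
    · exfalso
      apply hne
      have hpre : IsPreconnected {s : ℂ | s.re < σ₀} :=
        (convex_halfSpace_re_lt σ₀).isPreconnected
      have hon : AnalyticOnNhd ℂ F₁ {s : ℂ | s.re < σ₀} := h₁.analyticOnNhd hUopen
      intro z hz
      exact hon.eqOn_zero_of_preconnected_of_eventuallyEq_zero hpre hρdom h hz
    · exact h
  rw [eventually_nhdsWithin_iff] at hiso
  rw [Metric.eventually_nhds_iff] at hiso
  obtain ⟨r, hr0, hr⟩ := hiso
  refine ⟨min r ((σ₀ - ρ.re) / 2), lt_min hr0 (by linarith), ?_⟩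
  intro δ hδ hδ₀
  have hδr : δ < r := lt_of_lt_of_le hδ₀ (min_le_left _ _)
  have hδσ : δ < (σ₀ - ρ.re) / 2 := lt_of_lt_of_le hδ₀ (min_le_right _ _)
  -- points of the sphere around ρ are in the domain
  have hsub : ∀ z : ℂ, ‖z - ρ‖ ≤ δ → z.re < σ₀ := by
    intro z hz
    have h1 : |(z - ρ).re| ≤ ‖z - ρ‖ := Complex.abs_re_le_norm _
    have h2 : (z - ρ).re = z.re - ρ.re := by simp
    rw [h2] at h1
    have := abs_le.mp h1
    linarith [this.2]
  -- minimum of |F₁| on the sphere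
  obtain ⟨s₀, hs₀, hmin⟩ := (isCompact_sphere ρ δ).exists_isMinOn
    (NormedSpace.sphere_nonempty.mpr hδ.le)
    (continuous_norm.comp_continuousOn (h₁.continuousOn.mono (by
      intro z hz
      rw [mem_sphere_iff_norm] at hz
      exact hsub z (le_of_eq hz))))
  set γ : ℝ := ‖F₁ s₀‖ with hγdef
  have hγpos : 0 < γ := by
    rw [mem_sphere_iff_norm] at hs₀
    have hne' : F₁ s₀ ≠ 0 := by
      apply hr
      · rw [dist_eq_norm]; rw [hs₀]; exact hδr
      · intro h; rw [h] at hs₀; simp at hs₀; linarith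
    simpa [hγdef, norm_pos_iff] using hne'
  have hγmin : ∀ z ∈ Metric.sphere ρ δ, γ ≤ ‖F₁ z‖ := fun z hz => hmin hz
  -- growth bound
  obtain ⟨A, C, hC, hAC⟩ := hgrow (ρ.re - δ) ((ρ.re + σ₀) / 2) (by linarith)
  -- threshold for exponential decay
  have htend : Filter.Tendsto (fun t : ℝ => C * (t ^ A * Real.exp (-Real.pi * t)))
      Filter.atTop (nhds 0) := by
    have := (tendsto_rpow_mul_exp_neg_mul_atTop_nhds_zero A Real.pi Real.pi_pos).const_mul C
    simpa using this
  have hev : ∀ᶠ t in Filter.atTop, C * (t ^ A * Real.exp (-Real.pi * t)) < γ / 5 :=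
    htend.eventually_lt_const (by positivity)
  obtain ⟨T₀, hT₀⟩ := Filter.eventually_atTop.mp hev
  set T : ℝ := max T₀ 1 with hTdef
  have hT1 : (1:ℝ) ≤ T := le_max_right _ _
  have hT : ∀ t : ℝ, T ≤ t → C * (t ^ A * Real.exp (-Real.pi * t)) < γ / 5 :=
    fun t ht => hT₀ t (le_trans (le_max_left _ _) ht)
  -- almost periodicity
  obtain ⟨L, hL, hL2⟩ := hAP δ (γ / 5) hδ (by positivity)
  obtain ⟨τ, hτx, _, hτ3⟩ := hL2 (T + δ)
  have hτpos : 0 < τ := by linarith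
  set c : ℂ := ρ + τ * I with hcdef
  have hcre : c.re = ρ.re := by simp [hcdef]
  have hcim : c.im = ρ.im + τ := by simp [hcdef]
  -- bound for the second term on the closed ball
  set eterm : ℂ → ℂ := fun z => (ε : ℂ) * exp (-(Real.pi * I * (1 - z))) * F₂ z with hetermdef
  have hballdom : ∀ z ∈ Metric.closedBall c δ, z.re < σ₀ := by
    intro z hz
    have h1 : |(z - c).re| ≤ ‖z - c‖ := Complex.abs_re_le_norm _
    rw [Metric.mem_closedBall, dist_eq_norm] at hz
    have h2 : (z - c).re = z.re - ρ.re := by rw [Complex.sub_re, hcre]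
    rw [h2] at h1
    have := abs_le.mp (le_trans h1 hz)
    linarith [this.2]
  have hetermbound : ∀ z ∈ Metric.closedBall c δ, ‖eterm z‖ ≤ γ / 5 := by
    intro z hz
    rw [Metric.mem_closedBall, dist_eq_norm] at hz
    have h1 : |(z - c).re| ≤ ‖z - c‖ := Complex.abs_re_le_norm _
    have h1' : |(z - c).im| ≤ ‖z - c‖ := Complex.abs_im_le_norm _
    have h2 : (z - c).re = z.re - ρ.re := by rw [Complex.sub_re, hcre]
    have h3 : (z - c).im = z.im - (ρ.im + τ) := by rw [Complex.sub_im, hcim]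
    rw [h2] at h1; rw [h3] at h1'
    have hre := abs_le.mp (le_trans h1 hz)
    have him := abs_le.mp (le_trans h1' hz)
    have hzim : T ≤ z.im := by linarith [him.1]
    have hzim1 : (1:ℝ) ≤ z.im := le_trans hT1 hzim
    have habsim : |z.im| = z.im := abs_of_pos (by linarith)
    have hF2 : ‖F₂ z‖ ≤ C * |z.im| ^ A :=
      (hAC z (by linarith [hre.1]) (by linarith [hre.2]) (by rw [habsim]; exact hzim1)).2
    have hexp : ‖exp (-(Real.pi * I * (1 - z)))‖ = Real.exp (-Real.pi * z.im) := by
      rw [Complex.norm_exp]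
      congr 1
      simp [Complex.mul_re, Complex.sub_re, Complex.sub_im]
    have hε1 : ‖(ε : ℂ)‖ = 1 := by
      rcases hε with h | h <;> simp [h]
    have habs : ‖eterm z‖ = Real.exp (-Real.pi * z.im) * ‖F₂ z‖ := by
      simp only [hetermdef, norm_mul, hε1, hexp, one_mul]
    have hF2' : ‖F₂ z‖ ≤ C * z.im ^ A := by rwa [habsim] at hF2
    rw [habs]
    have hkey : Real.exp (-Real.pi * z.im) * ‖F₂ z‖
        ≤ C * (z.im ^ A * Real.exp (-Real.pi * z.im)) := by
      calc Real.exp (-Real.pi * z.im) * ‖F₂ z‖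
          ≤ Real.exp (-Real.pi * z.im) * (C * z.im ^ A) :=
            mul_le_mul_of_nonneg_left hF2' (Real.exp_pos (-Real.pi * z.im)).le
        _ = C * (z.im ^ A * Real.exp (-Real.pi * z.im)) := by ring
    exact le_trans hkey (hT z.im hzim).le
  -- the auxiliary function H
  set Hf : ℂ → ℂ := fun z => F₁ z + eterm z with hHdef
  -- boundary lower bound
  have hbdry : ∀ z ∈ Metric.sphere c δ, 3 * γ / 5 ≤ ‖Hf z‖ := by
    intro z hz
    rw [mem_sphere_iff_norm] at hz
    have hs : ‖z - c‖ = δ := hz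
    have hap := hτ3 (z - c) hs
    have he1 : z - c + ρ + τ * I = z := by rw [hcdef]; ring
    have he2 : z - c + ρ = z - τ * I := by rw [hcdef]; ring
    rw [he1, he2] at hap
    have hsph : z - τ * I ∈ Metric.sphere ρ δ := by
      rw [mem_sphere_iff_norm]
      have : z - τ * I - ρ = z - c := by rw [hcdef]; ring
      rw [this]; exact hz
    have hγ1 : γ ≤ ‖F₁ (z - τ * I)‖ := hγmin _ hsph
    have het : ‖eterm z‖ ≤ γ / 5 :=
      hetermbound z (Metric.mem_closedBall.mpr (by rw [dist_eq_norm, hz]))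
    have e1 : F₁ (z - τ * I) = Hf z + -(F₁ z - F₁ (z - τ * I)) + -(eterm z) := by
      simp only [hHdef]; ring
    have htri : ‖F₁ (z - τ * I)‖ ≤
        ‖Hf z‖ + ‖F₁ z - F₁ (z - τ * I)‖ + ‖eterm z‖ := by
      have habseq : ‖F₁ (z - τ * I)‖ =
          ‖Hf z + -(F₁ z - F₁ (z - τ * I)) + -(eterm z)‖ :=
        congrArg norm e1
      rw [habseq]
      have n1 := norm_add_le (Hf z + -(F₁ z - F₁ (z - τ * I))) (-(eterm z))
      have n2 := norm_add_le (Hf z) (-(F₁ z - F₁ (z - τ * I)))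
      have m1 : ‖-(F₁ z - F₁ (z - τ * I))‖ = ‖F₁ z - F₁ (z - τ * I)‖ :=
        norm_neg _
      have m2 : ‖-(eterm z)‖ = ‖eterm z‖ := norm_neg _
      linarith
    linarith
  -- center upper bound via maximum modulus
  have hcenterF1 : ‖F₁ c‖ ≤ γ / 5 := by
    set φ : ℂ → ℂ := fun s => F₁ (s + ρ + τ * I) - F₁ (s + ρ) with hφdef
    have hφd : DiffContOnCl ℂ φ (Metric.ball (0:ℂ) δ) := by
      apply DifferentiableOn.diffContOnCl
      rw [closure_ball (0:ℂ) hδ.ne']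
      have hmem1 : ∀ s ∈ Metric.closedBall (0:ℂ) δ, (s + ρ + τ * I).re < σ₀ := by
        intro s hs
        rw [Metric.mem_closedBall, dist_zero_right] at hs
        have : |s.re| ≤ ‖s‖ := Complex.abs_re_le_norm _
        have h4 : (s + ρ + τ * I).re = s.re + ρ.re := by simp
        rw [h4]
        have := abs_le.mp (le_trans this hs)
        linarith [this.2]
      have hmem2 : ∀ s ∈ Metric.closedBall (0:ℂ) δ, (s + ρ).re < σ₀ := by
        intro s hs
        rw [Metric.mem_closedBall, dist_zero_right] at hs
        have : |s.re| ≤ ‖s‖ := Complex.abs_re_le_norm _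
        have h4 : (s + ρ).re = s.re + ρ.re := by simp
        rw [h4]
        have := abs_le.mp (le_trans this hs)
        linarith [this.2]
      have comp1 : ∀ w : ℂ, (∀ s ∈ Metric.closedBall (0:ℂ) δ, (s + w).re < σ₀) →
          DifferentiableOn ℂ (fun s => F₁ (s + w)) (Metric.closedBall (0:ℂ) δ) := by
        intro w hw
        exact DifferentiableOn.comp h₁ ((differentiable_id.add_const w).differentiableOn)
          (fun x hx => hw x hx)
      apply DifferentiableOn.sub
      · exact (comp1 (ρ + τ * I) (fun s hs => by
          have := hmem1 s hs; rwa [add_assoc] at this)).congr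
          (fun x _ => by rw [add_assoc])
      · exact comp1 ρ hmem2
    have hφfr : ∀ s ∈ frontier (Metric.ball (0:ℂ) δ), ‖φ s‖ ≤ γ / 5 := by
      intro s hs
      rw [frontier_ball (0:ℂ) hδ.ne'] at hs
      rw [mem_sphere_iff_norm, sub_zero] at hs
      exact (hτ3 s hs).le
    have h0mem : (0:ℂ) ∈ closure (Metric.ball (0:ℂ) δ) := by
      rw [closure_ball (0:ℂ) hδ.ne']
      exact Metric.mem_closedBall_self hδ.le
    have := Complex.norm_le_of_forall_mem_frontier_norm_le Metric.isBounded_ball hφd hφfr h0mem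
    have hφ0 : φ 0 = F₁ c := by
      simp only [hφdef, zero_add, hρ, sub_zero, hcdef]
    rwa [hφ0] at this
  -- center bound for H
  have hcenter : ‖Hf c‖ < 3 * γ / 5 := by
    have h1 : ‖Hf c‖ ≤ ‖F₁ c‖ + ‖eterm c‖ :=
      norm_add_le _ _
    have h2 := hetermbound c (Metric.mem_closedBall_self hδ.le)
    linarith
  -- H is differentiable on the closed ball
  have hHd : DifferentiableOn ℂ Hf (Metric.closedBall c δ) := by
    apply DifferentiableOn.add
    · exact h₁.mono (fun z hz => hballdom z hz)
    · apply DifferentiableOn.mul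
      · apply Differentiable.differentiableOn
        apply Differentiable.const_mul
        apply Complex.differentiable_exp.comp
        fun_prop
      · exact h₂.mono (fun z hz => hballdom z hz)
  obtain ⟨z, hzball, hz0⟩ := exists_zero_of_center_lt Hf c δ (3 * γ / 5) hδ (by positivity)
    hHd hbdry hcenter
  refine ⟨τ, hτpos, z, ?_, ?_⟩
  · rw [Metric.mem_ball, dist_eq_norm] at hzball
    exact hzball
  · have key : exp (Real.pi * I * (1 - z) / 2) * F₁ z +
        (ε : ℂ) * exp (-(Real.pi * I * (1 - z) / 2)) * F₂ z =
        exp (Real.pi * I * (1 - z) / 2) * Hf z := by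
      have h3 : exp ((Real.pi : ℂ) * I * (1 - z) / 2) * exp (-(Real.pi * I * (1 - z))) =
          exp (-((Real.pi : ℂ) * I * (1 - z) / 2)) := by
        rw [← Complex.exp_add]
        congr 1
        ring
      simp only [hHdef, hetermdef]
      linear_combination (-((ε : ℂ) * F₂ z)) * h3
    rw [key, hz0, mul_zero]
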